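/- Set D₀ = Q ∩ P. Then P is the disjoint union of the double cosets D₀·S_ψ and D₀·τ₁·S_ψ; that is, {I₄, τ₁} is a complete set of (D₀, S_ψ)-double coset representatives in P. -/
import Mathlib


open Matrix

variable (F : Type*) [Field F]

/-- The standard alternating matrix `J = [[0, I₂], [-I₂, 0]]`. -/
def Jmat : Matrix (Fin 2 ⊕ Fin 2) (Fin 2 ⊕ Fin 2) F := Matrix.fromBlocks 0 1 (-1) 0

/-- The symplectic group `Sp₄(F)`, as a set of matrices. -/
def Sp4 : Set (Matrix (Fin 2 ⊕ Fin 2) (Fin 2 ⊕ Fin 2) F) :=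
  {g | gᵀ * Jmat F * g = Jmat F}

/-- The Siegel parabolic subgroup `P` of `Sp₄(F)`, as a set of matrices. -/
def P4 : Set (Matrix (Fin 2 ⊕ Fin 2) (Fin 2 ⊕ Fin 2) F) :=
  {m | ∃ g X : Matrix (Fin 2) (Fin 2) F,
    IsUnit g ∧ (g⁻¹ * X)ᵀ = g⁻¹ * X ∧ m = Matrix.fromBlocks g X 0 (g⁻¹)ᵀ}

/-- `O₂(F, C) = {[[a, 0], [y, d]] : a² = 1, d ≠ 0, y ∈ F}`. -/
def O2C : Set (Matrix (Fin 2) (Fin 2) F) :=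
  {g | ∃ a d y : F, a ^ 2 = 1 ∧ d ≠ 0 ∧ g = !![a, 0; y, d]}

/-- `S_ψ = {[[g, X], [0, ᵗg⁻¹]] ∈ P : g ∈ O₂(F, C)}`. -/
def Spsi : Set (Matrix (Fin 2 ⊕ Fin 2) (Fin 2 ⊕ Fin 2) F) :=
  {m | ∃ g X : Matrix (Fin 2) (Fin 2) F,
    g ∈ O2C F ∧ IsUnit g ∧ (g⁻¹ * X)ᵀ = g⁻¹ * X ∧ m = Matrix.fromBlocks g X 0 (g⁻¹)ᵀ}

/-- `σ₁ = [[0,0,-1,0],[0,1,0,0],[1,0,0,0],[0,0,0,1]]`. -/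
def sig1 : Matrix (Fin 2 ⊕ Fin 2) (Fin 2 ⊕ Fin 2) F :=
  Matrix.fromBlocks !![0, 0; 0, 1] !![-1, 0; 0, 0] !![1, 0; 0, 0] !![0, 0; 0, 1]

/-- `σ₂ = [[0, -I₂], [I₂, 0]]`. -/
def sig2 : Matrix (Fin 2 ⊕ Fin 2) (Fin 2 ⊕ Fin 2) F := Matrix.fromBlocks 0 (-1) 1 0

/-- `τ₁ = diag(h₁, h₁)` with `h₁ = [[0,1],[1,0]]`. -/
def tau1 : Matrix (Fin 2 ⊕ Fin 2) (Fin 2 ⊕ Fin 2) F :=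
  Matrix.fromBlocks !![0, 1; 1, 0] 0 0 !![0, 1; 1, 0]

/-- Double coset `A · w · B`. -/
def DC {α : Type*} [Mul α] (A : Set α) (w : α) (B : Set α) : Set α :=
  {x | ∃ a ∈ A, ∃ b ∈ B, x = a * w * b}

/-- The Klingen parabolic subgroup `Q`: the stabilizer in `Sp₄(F)` of the line `F·e₁`. -/
def Qkl : Set (Matrix (Fin 2 ⊕ Fin 2) (Fin 2 ⊕ Fin 2) F) :=
  {m | m ∈ Sp4 F ∧
    Submodule.map (Matrix.mulVecLin m)
      (Submodule.span F {Pi.single (Sum.inl 0) 1}) =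
    Submodule.span F {(Pi.single (Sum.inl 0) 1 : (Fin 2 ⊕ Fin 2) → F)}}

/-- `D₀ = Q ∩ P`. -/
def D0 : Set (Matrix (Fin 2 ⊕ Fin 2) (Fin 2 ⊕ Fin 2) F) := Qkl F ∩ P4 F

section Aux

variable {F}

private lemma FB_mul (g X D g' X' D' : Matrix (Fin 2) (Fin 2) F) :
    fromBlocks g X 0 D * fromBlocks g' X' 0 D'
      = fromBlocks (g * g') (g * X' + X * D') 0 (D * D') := by
  simp [Matrix.fromBlocks_multiply]

private lemma P4_subset_Sp4 : P4 F ⊆ Sp4 F := by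
  rintro m ⟨g, X, hg, hsym, rfl⟩
  have hdet : IsUnit g.det := (Matrix.isUnit_iff_isUnit_det g).mp hg
  have h1 : g⁻¹ * g = 1 := Matrix.nonsing_inv_mul g hdet
  have e1 : gᵀ * gᵀ⁻¹ = (1 : Matrix (Fin 2) (Fin 2) F) :=
    Matrix.mul_nonsing_inv _ (by simpa using hdet)
  have e2 : Xᵀ * gᵀ⁻¹ = g⁻¹ * X := by
    rw [← Matrix.transpose_nonsing_inv, ← Matrix.transpose_mul, hsym]
  show _ = _
  simp only [Sp4, Set.mem_setOf_eq, Jmat, Matrix.fromBlocks_transpose,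
    Matrix.fromBlocks_multiply, Matrix.transpose_transpose, Matrix.transpose_zero,
    Matrix.mul_zero, Matrix.zero_mul, Matrix.mul_one, Matrix.one_mul,
    Matrix.mul_neg, Matrix.neg_mul, zero_add, add_zero, Matrix.transpose_nonsing_inv]
  rw [e1, h1, e2]
  simp

private lemma P4_mul {m1 m2 : Matrix (Fin 2 ⊕ Fin 2) (Fin 2 ⊕ Fin 2) F}
    (h1 : m1 ∈ P4 F) (h2 : m2 ∈ P4 F) : m1 * m2 ∈ P4 F := by
  obtain ⟨g, X, hg, hX, rfl⟩ := h1
  obtain ⟨g', X', hg', hX', rfl⟩ := h2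
  have hdet : IsUnit g.det := (Matrix.isUnit_iff_isUnit_det g).mp hg
  have hinv : g⁻¹ * g = 1 := Matrix.nonsing_inv_mul g hdet
  refine ⟨g * g', g * X' + X * (g'⁻¹)ᵀ, hg.mul hg', ?_, ?_⟩
  · set Y : Matrix (Fin 2) (Fin 2) F := g⁻¹ * X with hYdef
    set Y' : Matrix (Fin 2) (Fin 2) F := g'⁻¹ * X' with hY'def
    have key : (g * g')⁻¹ * (g * X' + X * (g'⁻¹)ᵀ)
        = Y' + g'⁻¹ * (Y * (g'⁻¹)ᵀ) := by
      rw [Matrix.mul_inv_rev, mul_add]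
      congr 1
      · rw [mul_assoc, ← mul_assoc g⁻¹, hinv, one_mul]
      · rw [hYdef]; noncomm_ring
    rw [key]
    simp only [Matrix.transpose_add, Matrix.transpose_mul, Matrix.transpose_transpose,
      hX, hX']
    congr 1
    rw [mul_assoc]
  · rw [FB_mul, Matrix.mul_inv_rev, Matrix.transpose_mul]

private lemma one_mem_P4 : (1 : Matrix (Fin 2 ⊕ Fin 2) (Fin 2 ⊕ Fin 2) F) ∈ P4 F :=
  ⟨1, 0, isUnit_one, by simp, by simp [← Matrix.fromBlocks_one]⟩

private def hmat (F : Type*) [Field F] : Matrix (Fin 2) (Fin 2) F := !![0, 1; 1, 0]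

private lemma hmat_mul_hmat : hmat F * hmat F = 1 := by
  ext i j
  fin_cases i <;> fin_cases j <;>
    simp [hmat, Matrix.mul_apply, Fin.sum_univ_two, Matrix.one_apply]

private lemma hmat_inv : (hmat F)⁻¹ = hmat F :=
  Matrix.inv_eq_right_inv hmat_mul_hmat

private lemma hmat_transpose : (hmat F)ᵀ = hmat F := by
  ext i j
  fin_cases i <;> fin_cases j <;> rfl

private lemma hmat_isUnit : IsUnit (hmat F) :=
  ⟨⟨hmat F, hmat F, hmat_mul_hmat, hmat_mul_hmat⟩, rfl⟩

private lemma tau1_eq : tau1 F = fromBlocks (hmat F) 0 0 ((hmat F)⁻¹)ᵀ := by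
  rw [hmat_inv, hmat_transpose, tau1, hmat]

private lemma tau1_mem_P4 : tau1 F ∈ P4 F :=
  ⟨hmat F, 0, hmat_isUnit, by simp, tau1_eq⟩

private lemma Spsi_subset_P4 : Spsi F ⊆ P4 F := by
  rintro m ⟨g, X, _, hg, hX, rfl⟩
  exact ⟨g, X, hg, hX, rfl⟩

private lemma D0_subset_P4 : D0 F ⊆ P4 F := Set.inter_subset_right

end Aux


section Aux2

variable {F}

private lemma det_ne_zero_of_isUnit {b : Matrix (Fin 2) (Fin 2) F} (hb : IsUnit b) :
    b.det ≠ 0 := by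
  intro h
  rw [Matrix.isUnit_iff_isUnit_det, h] at hb
  simp at hb

private lemma mem_D0_of {b : Matrix (Fin 2) (Fin 2) F} (hb : IsUnit b) (hb10 : b 1 0 = 0) :
    fromBlocks b 0 0 (b⁻¹)ᵀ ∈ D0 F := by
  have hbP : fromBlocks b 0 0 (b⁻¹)ᵀ ∈ P4 F := ⟨b, 0, hb, by simp, rfl⟩
  refine ⟨⟨P4_subset_Sp4 hbP, ?_⟩, hbP⟩
  have hb00 : b 0 0 ≠ 0 := by
    intro h
    apply det_ne_zero_of_isUnit hb
    rw [Matrix.det_fin_two, h, hb10]; ring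
  rw [Submodule.map_span, Set.image_singleton]
  have hv : (fromBlocks b 0 0 (b⁻¹)ᵀ).mulVecLin (Pi.single (Sum.inl 0) 1)
      = b 0 0 • (Pi.single (Sum.inl 0) 1 : (Fin 2 ⊕ Fin 2) → F) := by
    funext i
    rw [Matrix.mulVecLin_apply, Matrix.mulVec_single]
    rcases i with i | i
    · fin_cases i <;> simp [hb10]
    · fin_cases i <;> simp
  rw [hv, Submodule.span_singleton_smul_eq (isUnit_iff_ne_zero.mpr hb00)]

private lemma D0_struct {m : Matrix (Fin 2 ⊕ Fin 2) (Fin 2 ⊕ Fin 2) F} (hm : m ∈ D0 F) :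
    ∃ b X : Matrix (Fin 2) (Fin 2) F, IsUnit b ∧ b 1 0 = 0 ∧ b 1 1 ≠ 0 ∧
      m = fromBlocks b X 0 (b⁻¹)ᵀ := by
  obtain ⟨⟨_, hspan⟩, b, X, hb, hXs, rfl⟩ := hm
  have hmem : (fromBlocks b X 0 (b⁻¹)ᵀ).mulVecLin (Pi.single (Sum.inl 0) 1)
      ∈ Submodule.span F {(Pi.single (Sum.inl 0) 1 : (Fin 2 ⊕ Fin 2) → F)} := by
    rw [← hspan]
    exact Submodule.mem_map_of_mem (Submodule.mem_span_singleton_self _)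
  obtain ⟨c, hc⟩ := Submodule.mem_span_singleton.mp hmem
  have h10 : b 1 0 = 0 := by
    have h := congrFun hc (Sum.inl 1)
    simpa [Matrix.mulVecLin_apply, Matrix.mulVec_single] using h.symm
  have h11 : b 1 1 ≠ 0 := by
    intro h
    apply det_ne_zero_of_isUnit hb
    rw [Matrix.det_fin_two, h, h10]; ring
  exact ⟨b, X, hb, h10, h11, rfl⟩

end Aux2


/-- `{I₄, τ₁}` is a complete set of `(D₀, S_ψ)`-double coset
representatives in `P`. -/
theorem D0_Spsi_double_cosets (h2 : (2 : F) ≠ 0) :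
    (P4 F = DC (D0 F) 1 (Spsi F) ∪ DC (D0 F) (tau1 F) (Spsi F)) ∧
    Disjoint (DC (D0 F) 1 (Spsi F)) (DC (D0 F) (tau1 F) (Spsi F)) := by
  constructor
  · apply Set.Subset.antisymm
    · rintro m ⟨g, X, hg, hXs, rfl⟩
      have hdet : g.det ≠ 0 := det_ne_zero_of_isUnit hg
      have hgg : g * g⁻¹ = 1 :=
        Matrix.mul_nonsing_inv g ((Matrix.isUnit_iff_isUnit_det g).mp hg)
      have hgg' : g⁻¹ * g = 1 :=
        Matrix.nonsing_inv_mul g ((Matrix.isUnit_iff_isUnit_det g).mp hg)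
      have e2 : g * (g⁻¹ * X) = X := by rw [← mul_assoc, hgg, one_mul]
      by_cases h11 : g 1 1 = 0
      · -- Klingen-excluded case: use τ₁
        right
        have h01 : g 0 1 ≠ 0 := by
          intro h; apply hdet; rw [Matrix.det_fin_two, h11, h]; ring
        have h10 : g 1 0 ≠ 0 := by
          intro h; apply hdet; rw [Matrix.det_fin_two, h11, h]; ring
        set b : Matrix (Fin 2) (Fin 2) F := !![g 0 1, g 0 0; 0, g 1 0] with hbdef
        have hbdet : b.det ≠ 0 := by
          rw [hbdef, Matrix.det_fin_two_of]
          simpa using mul_ne_zero h01 h10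
        have hbU : IsUnit b :=
          (Matrix.isUnit_iff_isUnit_det b).mpr (isUnit_iff_ne_zero.mpr hbdet)
        have hbh : b * hmat F = g := by
          ext i j
          fin_cases i <;> fin_cases j <;>
            simp [hbdef, hmat, Matrix.mul_apply, Fin.sum_univ_two, h11]
        have e3 : (g⁻¹)ᵀ = (b⁻¹)ᵀ * hmat F := by
          rw [← hbh, Matrix.mul_inv_rev, hmat_inv, Matrix.transpose_mul, hmat_transpose]
        refine ⟨_, mem_D0_of hbU (by simp [hbdef]),
          fromBlocks 1 (g⁻¹ * X) 0 ((1 : Matrix (Fin 2) (Fin 2) F)⁻¹)ᵀ,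
          ⟨1, g⁻¹ * X, ⟨1, 1, 0, one_pow 2, one_ne_zero, by rw [Matrix.one_fin_two]⟩,
            isUnit_one, by simpa using hXs, rfl⟩, ?_⟩
        rw [show tau1 F = fromBlocks (hmat F) 0 0 (hmat F) from rfl, FB_mul, FB_mul]
        simp only [mul_zero, zero_mul, mul_one, one_mul, add_zero, zero_add,
          Matrix.mul_zero, Matrix.zero_mul, inv_one, Matrix.transpose_one]
        rw [hbh, e2, e3]
      · -- main cell: use 1
        left
        set b : Matrix (Fin 2) (Fin 2) F := !![g.det / g 1 1, g 0 1 / g 1 1; 0, 1]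
          with hbdef
        set s : Matrix (Fin 2) (Fin 2) F := !![1, 0; g 1 0, g 1 1] with hsdef
        have hbdet : b.det ≠ 0 := by
          rw [hbdef, Matrix.det_fin_two_of]
          simpa using div_ne_zero hdet h11
        have hsdet : s.det ≠ 0 := by
          rw [hsdef, Matrix.det_fin_two_of]; simpa using h11
        have hbU : IsUnit b :=
          (Matrix.isUnit_iff_isUnit_det b).mpr (isUnit_iff_ne_zero.mpr hbdet)
        have hsU : IsUnit s :=
          (Matrix.isUnit_iff_isUnit_det s).mpr (isUnit_iff_ne_zero.mpr hsdet)
        have hss : s⁻¹ * s = 1 :=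
          Matrix.nonsing_inv_mul s ((Matrix.isUnit_iff_isUnit_det s).mp hsU)
        have hbs : b * s = g := by
          ext i j
          fin_cases i <;> fin_cases j <;>
            simp [hbdef, hsdef, Matrix.mul_apply, Fin.sum_univ_two]
          · field_simp
            rw [Matrix.det_fin_two]; ring
          · field_simp
        have e3 : (g⁻¹)ᵀ = (b⁻¹)ᵀ * (s⁻¹)ᵀ := by
          rw [← hbs, Matrix.mul_inv_rev, Matrix.transpose_mul]
        have hsym2 : (s⁻¹ * (s * (g⁻¹ * X)))ᵀ = s⁻¹ * (s * (g⁻¹ * X)) := by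
          rw [← mul_assoc, hss, one_mul]; exact hXs
        refine ⟨_, mem_D0_of hbU (by simp [hbdef]),
          fromBlocks s (s * (g⁻¹ * X)) 0 (s⁻¹)ᵀ,
          ⟨s, s * (g⁻¹ * X), ⟨1, g 1 1, g 1 0, one_pow 2, h11, hsdef⟩,
            hsU, hsym2, rfl⟩, ?_⟩
        rw [mul_one, FB_mul]
        simp only [Matrix.zero_mul, add_zero, zero_add]
        rw [← mul_assoc, hbs, e2, e3]
    · rintro m (⟨a, ha, s, hs, rfl⟩ | ⟨a, ha, s, hs, rfl⟩)
      · exact P4_mul (P4_mul (D0_subset_P4 ha) one_mem_P4) (Spsi_subset_P4 hs)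
      · exact P4_mul (P4_mul (D0_subset_P4 ha) tau1_mem_P4) (Spsi_subset_P4 hs)
  · rw [Set.disjoint_left]
    rintro x ⟨a, ha, s, hs, rfl⟩ ⟨a', ha', s', hs', heq⟩
    obtain ⟨p, Xa, hpU, hp10, hp11, rfl⟩ := D0_struct ha
    obtain ⟨p', Xa', hp'U, hp'10, hp'11, rfl⟩ := D0_struct ha'
    obtain ⟨q, Xq, ⟨α, d, y, hα, hd, rfl⟩, hqU, hqsym, rfl⟩ := hs
    obtain ⟨q', Xq', ⟨α', d', y', hα', hd', rfl⟩, hq'U, hq'sym, rfl⟩ := hs'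
    rw [mul_one, FB_mul] at heq
    rw [show tau1 F = fromBlocks (hmat F) 0 0 (hmat F) from rfl, FB_mul, FB_mul] at heq
    have hE : (p * !![α, 0; y, d]) 1 1 = (p' * hmat F * !![α', 0; y', d']) 1 1 := by
      have h := congr_arg (fun M : Matrix (Fin 2 ⊕ Fin 2) (Fin 2 ⊕ Fin 2) F =>
        M (Sum.inl 1) (Sum.inl 1)) heq
      simpa using h
    have hL : (p * !![α, 0; y, d]) 1 1 = p 1 1 * d := by
      rw [Matrix.mul_apply, Fin.sum_univ_two]
      simp
    have hph : (p' * hmat F) 1 1 = 0 := by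
      rw [Matrix.mul_apply, Fin.sum_univ_two]
      simp [hmat, hp'10]
    have hR : (p' * hmat F * !![α', 0; y', d']) 1 1 = 0 := by
      rw [Matrix.mul_apply, Fin.sum_univ_two, hph]
      simp
    exact mul_ne_zero hp11 hd (by rw [← hL, hE, hR])
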